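/- Let P ∈ D̂_1^sym be a regular operator with ord(P) = k > 0 whose symbol action on the space F of constant-coefficient operators is injective. Then there exists an invertible operator S ∈ D̂_1^sym with ord(S) = 0 and constant term 1 such that P = S^{−1} ∂^k S. -/

import Mathlib

set_option linter.unusedSectionVars false
set_option linter.unusedTactic false
set_option linter.unnecessarySeqFocus false


/-!
STATEMENT 19: Let `P ∈ D̂₁^sym` be a regular operator with `ord P = k > 0`
(regular: the symbol action `f ↦ π(f ∘ σ(P))` on the space `F` of
constant-coefficient operators is injective). Then there exists an invertible
`S ∈ D̂₁^sym` with `ord S = 0` and constant term 1 (zeroth slice equal to `1`)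
such that `P = S⁻¹ ∂^k S`.
-/

open MvPowerSeries

noncomputable section

variable {K : Type*} [Field K] [CharZero K]

def dg (k : Fin 1 → ℕ) : ℕ := ∑ i, k i

def dgF (μ : Fin 1 →₀ ℕ) : ℕ := μ.sum fun _ e => e

abbrev Op (K : Type*) [Field K] := (Fin 1 → ℕ) → MvPowerSeries (Fin 1) K

def ord (P : Op K) : EReal :=
  ⨆ (k : Fin 1 → ℕ) (μ : Fin 1 →₀ ℕ) (_ : MvPowerSeries.coeff μ (P k) ≠ 0),
    ((((dg k : ℤ) - (dgF μ : ℤ) : ℤ) : ℝ) : EReal)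

def Dmulti (j : Fin 1 → ℕ) (b : MvPowerSeries (Fin 1) K) : MvPowerSeries (Fin 1) K :=
  fun ν => (∏ i, (((ν i + j i).factorial / (ν i).factorial : ℕ) : K)) *
    MvPowerSeries.coeff (ν + Finsupp.equivFunOnFinite.symm j) b

open Classical in
def opMul (P Q : Op K) : Op K :=
  fun m => fun μ =>
    ∑ᶠ (k : Fin 1 → ℕ) (j : Fin 1 → ℕ),
      if j ≤ k ∧ (fun i => k i - j i) ≤ m then
        ((∏ i, ((k i).choose (j i)) : ℕ) : K) *
          MvPowerSeries.coeff μ (P k * Dmulti j (Q (fun i => m i - (k i - j i))))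
      else 0

open Classical in
/-- the identity operator -/
def opOne : Op K := fun k => if k = 0 then 1 else 0

open Classical in
/-- the operator `∂^k` -/
def delPow (k : ℕ) : Op K := fun j => if j = (fun _ => k) then 1 else 0

open Classical in
/-- the homogeneous component of ord-degree `d`; for `d = ord P` this is the
highest symbol `σ(P)` -/
def opComp (P : Op K) (d : ℤ) : Op K :=
  fun k => fun μ =>
    if ((dg k : ℤ) - (dgF μ : ℤ)) = d then MvPowerSeries.coeff μ (P k) else 0

/-- the projection `π : D̂₁^sym → F = D̂₁^sym/(x)D̂₁^sym` -/
def piMap (P : Op K) : (Fin 1 → ℕ) → K :=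
  fun k => MvPowerSeries.constantCoeff (P k)

/-- the lift of an element of `F` to a constant-coefficient operator -/
def liftF (f : (Fin 1 → ℕ) →₀ K) : Op K :=
  fun k => MvPowerSeries.C (f k)

/-! ## Basic Fin 1 infrastructure -/

namespace S19

lemma fin1_eq_zero (i : Fin 1) : i = 0 := Subsingleton.elim _ _

lemma fun_const (k : Fin 1 → ℕ) : (fun _ => k 0) = k := by
  funext i; rw [fin1_eq_zero i]

lemma finsupp_single (μ : Fin 1 →₀ ℕ) : Finsupp.single 0 (μ 0) = μ := by
  refine Finsupp.ext fun i => ?_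
  rw [fin1_eq_zero i, Finsupp.single_eq_same]

lemma dg_const (m : ℕ) : dg (fun _ => m : Fin 1 → ℕ) = m := by
  simp [dg]

lemma dgF_single (μ : ℕ) : dgF (Finsupp.single 0 μ : Fin 1 →₀ ℕ) = μ := by
  simp [dgF]

/-- the coefficient of `x^μ` in the `m`-th slice of `P` -/
def cf (P : Op K) (m μ : ℕ) : K :=
  MvPowerSeries.coeff (Finsupp.single 0 μ) (P (fun _ => m))

lemma coeff_eq_cf (P : Op K) (k : Fin 1 → ℕ) (μ : Fin 1 →₀ ℕ) :
    MvPowerSeries.coeff μ (P k) = cf P (k 0) (μ 0) := by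
  rw [cf, fun_const, finsupp_single]

lemma op_ext {P Q : Op K} (h : ∀ m μ, cf P m μ = cf Q m μ) : P = Q := by
  funext k ν
  have := h (k 0) (ν 0)
  rw [cf, cf, fun_const] at this
  have e : (MvPowerSeries.coeff (Finsupp.single 0 (ν 0)) (P k)) =
      (MvPowerSeries.coeff (Finsupp.single 0 (ν 0)) (Q k)) := this
  rwa [finsupp_single] at e

/-- `P` has order at most `c` -/
def OrdLE (P : Op K) (c : ℕ) : Prop := ∀ m μ, μ + c < m → cf P m μ = 0

/-- the matrix of `P` acting on `F` on the right: row `n`, column `s`. -/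
def act (P : Op K) (n s : ℕ) : K :=
  ∑ j ∈ Finset.range (n+1), if n ≤ s + j then
    ((n.choose j : ℕ) : K) * ((j.factorial : ℕ) : K) * cf P (s + j - n) j else 0


lemma const_inj : Function.Injective (fun κ : ℕ => (fun _ => κ : Fin 1 → ℕ)) := by
  intro a b h; exact congrFun h 0

lemma le_const_iff (jf : Fin 1 → ℕ) (κ : ℕ) : jf ≤ (fun _ => κ) ↔ jf 0 ≤ κ := by
  constructor
  · intro h; exact h 0
  · intro h i; rw [fin1_eq_zero i]; exact h

lemma coeff_mul_single (φ ψ : MvPowerSeries (Fin 1) K) (μ : ℕ) :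
    MvPowerSeries.coeff (Finsupp.single 0 μ) (φ * ψ) =
      ∑ ab ∈ Finset.HasAntidiagonal.antidiagonal μ,
        MvPowerSeries.coeff (Finsupp.single 0 ab.1) φ *
        MvPowerSeries.coeff (Finsupp.single 0 ab.2) ψ := by
  rw [MvPowerSeries.coeff_mul]
  refine Finset.sum_nbij' (i := fun p => (p.1 0, p.2 0))
    (j := fun ab => (Finsupp.single 0 ab.1, Finsupp.single 0 ab.2)) ?_ ?_ ?_ ?_ ?_
  · intro p hp
    rw [Finset.HasAntidiagonal.mem_antidiagonal] at hp
    rw [Finset.HasAntidiagonal.mem_antidiagonal]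
    have := congrFun (congrArg (↑· : (Fin 1 →₀ ℕ) → (Fin 1 → ℕ)) hp) 0
    simpa using this
  · intro ab hab
    rw [Finset.HasAntidiagonal.mem_antidiagonal] at hab
    rw [Finset.HasAntidiagonal.mem_antidiagonal, ← Finsupp.single_add, hab]
  · intro p hp
    exact Prod.ext (finsupp_single p.1) (finsupp_single p.2)
  · intro ab hab
    simp
  · intro p hp
    simp only [finsupp_single]

lemma coeff_Dmulti (jf : Fin 1 → ℕ) (b : MvPowerSeries (Fin 1) K) (β : ℕ) :
    MvPowerSeries.coeff (Finsupp.single 0 β) (Dmulti jf b) =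
      (((β + jf 0).descFactorial (jf 0) : ℕ) : K) *
        MvPowerSeries.coeff (Finsupp.single 0 (β + jf 0)) b := by
  have h1 : MvPowerSeries.coeff (Finsupp.single 0 β) (Dmulti jf b) =
      (∏ i, ((((Finsupp.single 0 β : Fin 1 →₀ ℕ) i + jf i).factorial /
        ((Finsupp.single 0 β : Fin 1 →₀ ℕ) i).factorial : ℕ) : K)) *
      MvPowerSeries.coeff
        ((Finsupp.single 0 β : Fin 1 →₀ ℕ) + Finsupp.equivFunOnFinite.symm jf) b := rfl
  rw [h1]
  congr 1
  · rw [Fin.prod_univ_one]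
    rw [Finsupp.single_eq_same]
    rw [Nat.descFactorial_eq_div (Nat.le_add_left _ _)]
    norm_num
  · congr 1
    have : ((Finsupp.single 0 β : Fin 1 →₀ ℕ) + Finsupp.equivFunOnFinite.symm jf) 0
        = β + jf 0 := by simp
    rw [← this, finsupp_single]

lemma cf_opMul (P Q : Op K) {c : ℕ} (hP : OrdLE P c) (m μ : ℕ) :
    cf (opMul P Q) m μ = ∑ κ ∈ Finset.range (μ+c+1), ∑ j ∈ Finset.range (κ+1),
      (if κ - j ≤ m then ((κ.choose j : ℕ) : K) *
        ∑ ab ∈ Finset.HasAntidiagonal.antidiagonal μ, cf P κ ab.1 *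
          (((ab.2+j).descFactorial j : ℕ) : K) * cf Q (m - (κ - j)) (ab.2 + j)
      else 0) := by
  classical
  have hcoeff : ∀ (kf jf : Fin 1 → ℕ),
      MvPowerSeries.coeff (Finsupp.single 0 μ)
        (P kf * Dmulti jf (Q (fun i => m - (kf i - jf i)))) =
      ∑ ab ∈ Finset.HasAntidiagonal.antidiagonal μ, cf P (kf 0) ab.1 *
        ((((ab.2 + jf 0).descFactorial (jf 0) : ℕ) : K) *
          cf Q (m - (kf 0 - jf 0)) (ab.2 + jf 0)) := by
    intro kf jf
    rw [coeff_mul_single]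
    refine Finset.sum_congr rfl fun ab _ => ?_
    rw [coeff_Dmulti, coeff_eq_cf, coeff_eq_cf, Finsupp.single_eq_same, Finsupp.single_eq_same]
  -- the inner finsum as a finite sum
  have hinner : ∀ (kf : Fin 1 → ℕ),
      (∑ᶠ (jf : Fin 1 → ℕ),
        if jf ≤ kf ∧ (fun i => kf i - jf i) ≤ (fun _ => m) then
          ((∏ i, ((kf i).choose (jf i)) : ℕ) : K) *
            MvPowerSeries.coeff (Finsupp.single 0 μ)
              (P kf * Dmulti jf (Q (fun i => (fun _ => m) i - (kf i - jf i))))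
        else 0) =
      ∑ j ∈ Finset.range (kf 0 + 1),
        (if kf 0 - j ≤ m then (((kf 0).choose j : ℕ) : K) *
          ∑ ab ∈ Finset.HasAntidiagonal.antidiagonal μ, cf P (kf 0) ab.1 *
            (((ab.2+j).descFactorial j : ℕ) : K) * cf Q (m - (kf 0 - j)) (ab.2 + j)
        else 0) := by
    intro kf
    rw [finsum_eq_sum_of_support_subset _ (s := (Finset.range (kf 0 + 1)).image
        (fun j : ℕ => (fun _ => j : Fin 1 → ℕ)))]
    · rw [Finset.sum_image (fun a _ b _ h => const_inj h)]
      refine Finset.sum_congr rfl fun j hj => ?_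
      rw [Finset.mem_range] at hj
      have hle : (fun _ => j : Fin 1 → ℕ) ≤ kf := by
        intro i
        show j ≤ kf i
        rw [fin1_eq_zero i]; omega
      have hcond : ((fun _ => j : Fin 1 → ℕ) ≤ kf ∧
          (fun i => kf i - (fun _ => j : Fin 1 → ℕ) i) ≤ (fun _ => m)) ↔ (kf 0 - j ≤ m) := by
        constructor
        · intro ⟨_, h2⟩; exact h2 0
        · intro h; exact ⟨hle, fun i => by rw [fin1_eq_zero i]; exact h⟩
      by_cases hc : kf 0 - j ≤ m
      · rw [if_pos (hcond.mpr hc), if_pos hc]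
        rw [hcoeff]
        simp only [Fin.prod_univ_one, Finset.mul_sum]
        exact Finset.sum_congr rfl fun ab _ => by ring
      · rw [if_neg (fun h => hc (hcond.mp h)), if_neg hc]
    · intro jf hjf
      simp only [Function.mem_support] at hjf
      by_cases hle : jf ≤ kf
      · have hb : jf 0 ≤ kf 0 := hle 0
        have : jf = (fun _ => jf 0) := (fun_const jf).symm
        rw [Finset.coe_image]
        exact ⟨jf 0, by simpa using Nat.lt_succ_of_le hb, this.symm⟩
      · exfalso; apply hjf
        rw [if_neg (fun h => hle h.1)]
  -- now the outer finsum
  have houter : cf (opMul P Q) m μ =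
      ∑ᶠ (kf : Fin 1 → ℕ), (∑ᶠ (jf : Fin 1 → ℕ),
        if jf ≤ kf ∧ (fun i => kf i - jf i) ≤ (fun _ => m) then
          ((∏ i, ((kf i).choose (jf i)) : ℕ) : K) *
            MvPowerSeries.coeff (Finsupp.single 0 μ)
              (P kf * Dmulti jf (Q (fun i => (fun _ => m) i - (kf i - jf i))))
        else 0) := rfl
  rw [houter]
  rw [finsum_eq_sum_of_support_subset _ (s := (Finset.range (μ+c+1)).image
      (fun κ : ℕ => (fun _ => κ : Fin 1 → ℕ)))]
  · rw [Finset.sum_image (fun a _ b _ h => const_inj h)]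
    exact Finset.sum_congr rfl fun κ _ => hinner _
  · intro kf hkf
    simp only [Function.mem_support] at hkf
    rw [hinner] at hkf
    by_cases hb : kf 0 < μ + c + 1
    · rw [Finset.coe_image]
      exact ⟨kf 0, by simpa using hb, fun_const kf⟩
    · exfalso; apply hkf
      refine Finset.sum_eq_zero fun j hj => ?_
      split_ifs with h
      · rw [Finset.sum_eq_zero, mul_zero]
        intro ab hab
        rw [Finset.HasAntidiagonal.mem_antidiagonal] at hab
        rw [hP _ _ (by omega)]
        ring
      · rfl




lemma descAdd (n a β : ℕ) :
    n.descFactorial (a+β) = n.descFactorial a * (n-a).descFactorial β := by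
  induction β with
  | zero => simp
  | succ β ih =>
      rw [← Nat.add_assoc, Nat.descFactorial_succ, Nat.descFactorial_succ, ih,
        Nat.sub_sub]
      ring

lemma idB (n a β : ℕ) :
    n.choose (a+β) * (a+β).factorial
      = n.choose a * a.factorial * ((n-a).choose β * β.factorial) := by
  have h := descAdd n a β
  simp only [Nat.descFactorial_eq_factorial_mul_choose] at h
  calc n.choose (a+β) * (a+β).factorial = (a+β).factorial * n.choose (a+β) := by ring
    _ = a.factorial * n.choose a * (β.factorial * (n-a).choose β) := h
    _ = _ := by ring

lemma idD (β j : ℕ) : (β+j).descFactorial j * β.factorial = (β+j).factorial := by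
  rw [Nat.descFactorial_eq_factorial_mul_choose]
  have := Nat.choose_mul_factorial_mul_factorial (Nat.le_add_left j β)
  calc j.factorial * (β+j).choose j * β.factorial
      = (β+j).choose j * j.factorial * (β+j-j).factorial := by
        rw [Nat.add_sub_cancel]; ring
    _ = (β+j).factorial := this

lemma idC (n' κ b : ℕ) :
    ((n'+κ).choose b : K) * (b.factorial : K) =
      ∑ ab ∈ Finset.HasAntidiagonal.antidiagonal b, (n'.choose ab.1 : K) * (ab.1.factorial : K) *
        (κ.choose ab.2 : K) * (((ab.1+ab.2).descFactorial ab.2 : ℕ) : K) := by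
  have hv := Nat.add_choose_eq n' κ b
  have : ∀ ab ∈ Finset.HasAntidiagonal.antidiagonal b,
      (n'.choose ab.1 : K) * (ab.1.factorial : K) * (κ.choose ab.2 : K) *
        (((ab.1+ab.2).descFactorial ab.2 : ℕ) : K)
      = ((n'.choose ab.1 * κ.choose ab.2 : ℕ) : K) * (b.factorial : K) := by
    intro ab hab
    rw [Finset.HasAntidiagonal.mem_antidiagonal] at hab
    have h2 : ((ab.1+ab.2).descFactorial ab.2) * ab.1.factorial = b.factorial := by
      rw [idD, hab]
    push_cast [← h2]
    ring
  rw [Finset.sum_congr rfl this, ← Finset.sum_mul, ← Nat.cast_sum, ← hv]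

/-- triangular reindexing -/
lemma tri (N : ℕ) (f : ℕ → ℕ → K) :
    ∑ i ∈ Finset.range N, ∑ α ∈ Finset.range (i+1), f α (i-α)
      = ∑ a ∈ Finset.range N, ∑ β ∈ Finset.range N, if a+β < N then f a β else 0 := by
  have rhs : ∑ a ∈ Finset.range N, ∑ β ∈ Finset.range N, (if a+β < N then f a β else 0)
      = ∑ p ∈ (Finset.range N ×ˢ Finset.range N).filter (fun p => p.1 + p.2 < N), f p.1 p.2 := by
    rw [Finset.sum_filter, Finset.sum_product]
  rw [rhs, Finset.sum_sigma']
  refine Finset.sum_nbij' (i := fun x => (x.2, x.1 - x.2)) (j := fun p => ⟨p.1 + p.2, p.1⟩)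
    ?_ ?_ ?_ ?_ ?_
  · rintro ⟨i, α⟩ hx
    simp only [Finset.mem_sigma, Finset.mem_range] at hx
    simp only [Finset.mem_filter, Finset.mem_product, Finset.mem_range]
    omega
  · rintro ⟨a, b⟩ hp
    simp only [Finset.mem_filter, Finset.mem_product, Finset.mem_range] at hp
    simp only [Finset.mem_sigma, Finset.mem_range]
    omega
  · rintro ⟨i, α⟩ hx
    simp only [Finset.mem_sigma, Finset.mem_range] at hx
    have h : α + (i - α) = i := by omega
    simp [h]
  · rintro ⟨a, b⟩ hp
    simp only [Finset.mem_filter, Finset.mem_product, Finset.mem_range] at hp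
    have h : a + b - a = b := by omega
    simp [h]
  · rintro ⟨i, α⟩ hx
    rfl

lemma act_band {P : Op K} {c : ℕ} (hP : OrdLE P c) {n s : ℕ} (h : n + c < s) :
    act P n s = 0 := by
  refine Finset.sum_eq_zero fun j hj => ?_
  split_ifs with hc
  · rw [hP _ _ (by omega)]; ring
  · rfl



/-- canonical 4-fold summand -/
def canBody (p q : ℕ → ℕ → K) (n s : ℕ) (a β κ j : ℕ) : K :=
  if n ≤ s + (a+β) ∧ κ - j ≤ s + (a+β) - n then
    ((n.choose (a+β) : ℕ) : K) * ((a+β).factorial : ℕ) * ((κ.choose j : ℕ) : K)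
      * (((β+j).descFactorial j : ℕ) : K)
      * p κ a * q ((s + (a+β) - n) - (κ - j)) (β+j)
  else 0

def bodyA (p q : ℕ → ℕ → K) (n s : ℕ) (i κ j : ℕ) (ab : ℕ × ℕ) : K :=
  if n ≤ s + i ∧ κ - j ≤ s+i-n then
    ((n.choose i : ℕ) : K) * ((i.factorial : ℕ) : K) * ((κ.choose j : ℕ) : K) *
      (((ab.2+j).descFactorial j : ℕ) : K) * p κ ab.1 * q ((s+i-n) - (κ-j)) (ab.2+j)
  else 0

lemma canBody_eq_zero_of_lt {p q : ℕ → ℕ → K} {n s a β κ j : ℕ} (h : n < a + β) :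
    canBody p q n s a β κ j = 0 := by
  unfold canBody
  split_ifs with hg
  · rw [Nat.choose_eq_zero_of_lt h]; push_cast; ring
  · rfl

lemma canBody_eq_zero_of_choose {p q : ℕ → ℕ → K} {n s a β κ j : ℕ} (h : κ < j) :
    canBody p q n s a β κ j = 0 := by
  unfold canBody
  split_ifs with hg
  · rw [Nat.choose_eq_zero_of_lt h]; push_cast; ring
  · rfl

lemma coreA {c : ℕ} (p q : ℕ → ℕ → K) (hp : ∀ m μ, μ + c < m → p m μ = 0) (n s : ℕ) :
    (∑ i ∈ Finset.range (n+1), if n ≤ s + i then ((n.choose i : ℕ) : K) * ((i.factorial : ℕ) : K) *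
        (∑ κ ∈ Finset.range (i+c+1), ∑ j ∈ Finset.range (κ+1),
          if κ - j ≤ s+i-n then ((κ.choose j : ℕ) : K) *
            ∑ ab ∈ Finset.HasAntidiagonal.antidiagonal i, p κ ab.1 * (((ab.2+j).descFactorial j : ℕ) : K)
              * q ((s+i-n) - (κ-j)) (ab.2+j)
          else 0)
      else 0)
    = ∑ a ∈ Finset.range (n+c+1), ∑ β ∈ Finset.range (n+c+1), ∑ κ ∈ Finset.range (n+c+1),
        ∑ j ∈ Finset.range (n+c+1), canBody p q n s a β κ j := by
  classical
  calc
    (∑ i ∈ Finset.range (n+1), if n ≤ s + i then ((n.choose i : ℕ) : K) * ((i.factorial : ℕ) : K) *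
        (∑ κ ∈ Finset.range (i+c+1), ∑ j ∈ Finset.range (κ+1),
          if κ - j ≤ s+i-n then ((κ.choose j : ℕ) : K) *
            ∑ ab ∈ Finset.HasAntidiagonal.antidiagonal i, p κ ab.1 * (((ab.2+j).descFactorial j : ℕ) : K)
              * q ((s+i-n) - (κ-j)) (ab.2+j)
          else 0)
      else 0)
      = ∑ i ∈ Finset.range (n+1), ∑ κ ∈ Finset.range (i+c+1), ∑ j ∈ Finset.range (κ+1),
          ∑ ab ∈ Finset.HasAntidiagonal.antidiagonal i, bodyA p q n s i κ j ab := by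
        refine Finset.sum_congr rfl fun i _ => ?_
        by_cases h1 : n ≤ s + i
        · rw [if_pos h1, Finset.mul_sum]
          refine Finset.sum_congr rfl fun κ _ => ?_
          rw [Finset.mul_sum]
          refine Finset.sum_congr rfl fun j _ => ?_
          by_cases h2 : κ - j ≤ s+i-n
          · rw [if_pos h2, ← mul_assoc, Finset.mul_sum]
            refine Finset.sum_congr rfl fun ab _ => ?_
            rw [bodyA, if_pos ⟨h1, h2⟩]
            ring
          · rw [if_neg h2, mul_zero]
            exact (Finset.sum_eq_zero fun ab _ => by
              rw [bodyA, if_neg (fun h => h2 h.2)]).symm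
        · rw [if_neg h1]
          exact (Finset.sum_eq_zero fun κ _ => Finset.sum_eq_zero fun j _ =>
            Finset.sum_eq_zero fun ab _ => by
              rw [bodyA, if_neg (fun h => h1 h.1)]).symm
    _ = ∑ i ∈ Finset.range (n+1), ∑ κ ∈ Finset.range (n+c+1), ∑ j ∈ Finset.range (κ+1),
          ∑ ab ∈ Finset.HasAntidiagonal.antidiagonal i, bodyA p q n s i κ j ab := by
        refine Finset.sum_congr rfl fun i hi => ?_
        rw [Finset.mem_range] at hi
        refine Finset.sum_subset (fun x hx => by rw [Finset.mem_range] at *; omega)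
          fun κ _ hκ => ?_
        rw [Finset.mem_range] at hκ
        refine Finset.sum_eq_zero fun j _ => Finset.sum_eq_zero fun ab hab => ?_
        rw [Finset.HasAntidiagonal.mem_antidiagonal] at hab
        rw [bodyA]
        split_ifs with hg
        · rw [hp κ ab.1 (by omega)]; ring
        · rfl
    _ = ∑ i ∈ Finset.range (n+1), ∑ κ ∈ Finset.range (n+c+1), ∑ j ∈ Finset.range (n+c+1),
          ∑ ab ∈ Finset.HasAntidiagonal.antidiagonal i, bodyA p q n s i κ j ab := by
        refine Finset.sum_congr rfl fun i _ => Finset.sum_congr rfl fun κ hκ => ?_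
        rw [Finset.mem_range] at hκ
        refine Finset.sum_subset (fun x hx => by rw [Finset.mem_range] at *; omega)
          fun j _ hj => ?_
        rw [Finset.mem_range] at hj
        refine Finset.sum_eq_zero fun ab _ => ?_
        rw [bodyA]
        split_ifs with hg
        · rw [Nat.choose_eq_zero_of_lt (show κ < j by omega)]; push_cast; ring
        · rfl
    _ = ∑ i ∈ Finset.range (n+1), ∑ ab ∈ Finset.HasAntidiagonal.antidiagonal i, ∑ κ ∈ Finset.range (n+c+1),
          ∑ j ∈ Finset.range (n+c+1), bodyA p q n s i κ j ab := by
        refine Finset.sum_congr rfl fun i _ => ?_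
        exact (Finset.sum_congr rfl fun κ _ => Finset.sum_comm).trans Finset.sum_comm
    _ = ∑ i ∈ Finset.range (n+1), ∑ α ∈ Finset.range (i+1),
          (fun a β => ∑ κ ∈ Finset.range (n+c+1), ∑ j ∈ Finset.range (n+c+1),
            canBody p q n s a β κ j) α (i - α) := by
        refine Finset.sum_congr rfl fun i _ => ?_
        rw [Finset.Nat.sum_antidiagonal_eq_sum_range_succ_mk]
        refine Finset.sum_congr rfl fun α hα => ?_
        rw [Finset.mem_range] at hα
        have h : α + (i - α) = i := by omega
        refine Finset.sum_congr rfl fun κ _ => Finset.sum_congr rfl fun j _ => ?_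
        simp only [bodyA, canBody, h]
    _ = ∑ a ∈ Finset.range (n+1), ∑ β ∈ Finset.range (n+1),
          if a + β < n+1 then (∑ κ ∈ Finset.range (n+c+1), ∑ j ∈ Finset.range (n+c+1),
            canBody p q n s a β κ j) else 0 :=
        tri (n+1) (fun a β => ∑ κ ∈ Finset.range (n+c+1), ∑ j ∈ Finset.range (n+c+1),
            canBody p q n s a β κ j)
    _ = ∑ a ∈ Finset.range (n+1), ∑ β ∈ Finset.range (n+1),
          ∑ κ ∈ Finset.range (n+c+1), ∑ j ∈ Finset.range (n+c+1),
            canBody p q n s a β κ j := by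
        refine Finset.sum_congr rfl fun a _ => Finset.sum_congr rfl fun β _ => ?_
        split_ifs with h
        · rfl
        · exact (Finset.sum_eq_zero fun κ _ => Finset.sum_eq_zero fun j _ =>
            canBody_eq_zero_of_lt (by omega)).symm
    _ = ∑ a ∈ Finset.range (n+c+1), ∑ β ∈ Finset.range (n+c+1),
          ∑ κ ∈ Finset.range (n+c+1), ∑ j ∈ Finset.range (n+c+1),
            canBody p q n s a β κ j := by
        have hsub : Finset.range (n+1) ⊆ Finset.range (n+c+1) := fun x hx => by
          rw [Finset.mem_range] at hx ⊢; omega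
        rw [Finset.sum_subset hsub (fun a _ ha =>
          Finset.sum_eq_zero fun β _ => Finset.sum_eq_zero fun κ _ =>
            Finset.sum_eq_zero fun j _ => canBody_eq_zero_of_lt (by
              rw [Finset.mem_range] at ha; omega))]
        refine Finset.sum_congr rfl fun a _ => ?_
        refine Finset.sum_subset hsub fun β _ hβ => ?_
        rw [Finset.mem_range] at hβ
        exact Finset.sum_eq_zero fun κ _ => Finset.sum_eq_zero fun j _ =>
          canBody_eq_zero_of_lt (by omega)



lemma coreB_inner {c : ℕ} (p q : ℕ → ℕ → K) (n s a κ : ℕ) (ha : a ≤ n) (hκ : κ ≤ n+c) :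
    (((n.choose a : ℕ) : K) * ((a.factorial : ℕ) : K) * p κ a) *
      (∑ b ∈ Finset.range (n-a+κ+1), if n-a+κ ≤ s+b then
        (((n-a+κ).choose b : ℕ) : K) * ((b.factorial : ℕ) : K) * q (s+b-(n-a+κ)) b else 0)
    = ∑ β ∈ Finset.range (n+c+1), ∑ j ∈ Finset.range (n+c+1), canBody p q n s a β κ j := by
  classical
  set N₀ := 2*(n+c)+2 with hN₀
  have hsub : Finset.range (n-a+κ+1) ⊆ Finset.range N₀ := fun x hx => by
    rw [Finset.mem_range] at hx ⊢; omega
  calc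
    (((n.choose a : ℕ) : K) * ((a.factorial : ℕ) : K) * p κ a) *
      (∑ b ∈ Finset.range (n-a+κ+1), if n-a+κ ≤ s+b then
        (((n-a+κ).choose b : ℕ) : K) * ((b.factorial : ℕ) : K) * q (s+b-(n-a+κ)) b else 0)
      = (((n.choose a : ℕ) : K) * ((a.factorial : ℕ) : K) * p κ a) *
        (∑ b ∈ Finset.range N₀, if n-a+κ ≤ s+b then
          (((n-a+κ).choose b : ℕ) : K) * ((b.factorial : ℕ) : K) * q (s+b-(n-a+κ)) b else 0) := by
        congr 1
        refine Finset.sum_subset hsub fun b _ hb => ?_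
        rw [Finset.mem_range] at hb
        split_ifs with hg
        · rw [Nat.choose_eq_zero_of_lt (show n-a+κ < b by omega)]; push_cast; ring
        · rfl
    _ = ∑ b ∈ Finset.range N₀, ∑ ab ∈ Finset.HasAntidiagonal.antidiagonal b,
          (fun β j => if n-a+κ ≤ s+(β+j) then
            ((n.choose a : ℕ) : K) * ((a.factorial : ℕ) : K) * p κ a *
            (((n-a).choose β : ℕ) : K) * ((β.factorial : ℕ) : K) * ((κ.choose j : ℕ) : K) *
            (((β+j).descFactorial j : ℕ) : K) * q (s+(β+j)-(n-a+κ)) (β+j)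
          else 0) ab.1 ab.2 := by
        rw [Finset.mul_sum]
        refine Finset.sum_congr rfl fun b _ => ?_
        by_cases hg : n-a+κ ≤ s+b
        · rw [if_pos hg]
          have e1 : (((n.choose a : ℕ) : K) * ((a.factorial : ℕ) : K) * p κ a) *
              ((((n-a+κ).choose b : ℕ) : K) * ((b.factorial : ℕ) : K) * q (s+b-(n-a+κ)) b)
              = ((((n-a)+κ).choose b : ℕ) * ((b.factorial : ℕ)) : K) *
                ((((n.choose a : ℕ) : K) * ((a.factorial : ℕ) : K) * p κ a) * q (s+b-(n-a+κ)) b) := by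
            push_cast; ring
          rw [e1, idC]
          rw [Finset.sum_mul]
          refine Finset.sum_congr rfl fun ab hab => ?_
          rw [Finset.HasAntidiagonal.mem_antidiagonal] at hab
          simp only
          rw [hab, if_pos hg]
          push_cast
          ring
        · rw [if_neg hg, mul_zero]
          refine (Finset.sum_eq_zero fun ab hab => ?_).symm
          rw [Finset.HasAntidiagonal.mem_antidiagonal] at hab
          simp only
          rw [hab, if_neg hg]
    _ = ∑ b ∈ Finset.range N₀, ∑ β ∈ Finset.range (b+1),
          (fun β j => if n-a+κ ≤ s+(β+j) then
            ((n.choose a : ℕ) : K) * ((a.factorial : ℕ) : K) * p κ a *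
            (((n-a).choose β : ℕ) : K) * ((β.factorial : ℕ) : K) * ((κ.choose j : ℕ) : K) *
            (((β+j).descFactorial j : ℕ) : K) * q (s+(β+j)-(n-a+κ)) (β+j)
          else 0) β (b - β) := by
        refine Finset.sum_congr rfl fun b _ => ?_
        rw [Finset.Nat.sum_antidiagonal_eq_sum_range_succ_mk]
    _ = ∑ β ∈ Finset.range N₀, ∑ j ∈ Finset.range N₀,
          if β + j < N₀ then
            (fun β j => if n-a+κ ≤ s+(β+j) then
              ((n.choose a : ℕ) : K) * ((a.factorial : ℕ) : K) * p κ a *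
              (((n-a).choose β : ℕ) : K) * ((β.factorial : ℕ) : K) * ((κ.choose j : ℕ) : K) *
              (((β+j).descFactorial j : ℕ) : K) * q (s+(β+j)-(n-a+κ)) (β+j)
            else 0) β j
          else 0 :=
        tri N₀ (fun β j => if n-a+κ ≤ s+(β+j) then
            ((n.choose a : ℕ) : K) * ((a.factorial : ℕ) : K) * p κ a *
            (((n-a).choose β : ℕ) : K) * ((β.factorial : ℕ) : K) * ((κ.choose j : ℕ) : K) *
            (((β+j).descFactorial j : ℕ) : K) * q (s+(β+j)-(n-a+κ)) (β+j)
          else 0)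
    _ = ∑ β ∈ Finset.range N₀, ∑ j ∈ Finset.range N₀,
          (if n-a+κ ≤ s+(β+j) then
            ((n.choose a : ℕ) : K) * ((a.factorial : ℕ) : K) * p κ a *
            (((n-a).choose β : ℕ) : K) * ((β.factorial : ℕ) : K) * ((κ.choose j : ℕ) : K) *
            (((β+j).descFactorial j : ℕ) : K) * q (s+(β+j)-(n-a+κ)) (β+j)
          else 0) := by
        refine Finset.sum_congr rfl fun β hβ => Finset.sum_congr rfl fun j hj => ?_
        rw [Finset.mem_range] at hβ hj
        by_cases hlt : β + j < N₀
        · rw [if_pos hlt]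
        · rw [if_neg hlt]
          have : β ≥ n+c+1 ∨ j ≥ n+c+1 := by omega
          rcases this with h | h
          · split_ifs with hg
            · rw [Nat.choose_eq_zero_of_lt (show n-a < β by omega)]; push_cast; ring
            · rfl
          · split_ifs with hg
            · rw [Nat.choose_eq_zero_of_lt (show κ < j by omega)]; push_cast; ring
            · rfl
    _ = ∑ β ∈ Finset.range (n+c+1), ∑ j ∈ Finset.range (n+c+1),
          (if n-a+κ ≤ s+(β+j) then
            ((n.choose a : ℕ) : K) * ((a.factorial : ℕ) : K) * p κ a *
            (((n-a).choose β : ℕ) : K) * ((β.factorial : ℕ) : K) * ((κ.choose j : ℕ) : K) *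
            (((β+j).descFactorial j : ℕ) : K) * q (s+(β+j)-(n-a+κ)) (β+j)
          else 0) := by
        have hsub2 : Finset.range (n+c+1) ⊆ Finset.range N₀ := fun x hx => by
          rw [Finset.mem_range] at hx ⊢; omega
        rw [← Finset.sum_subset hsub2 (fun β _ hβ => ?_)]
        · refine Finset.sum_congr rfl fun β hβ => ?_
          rw [Finset.mem_range] at hβ
          rw [← Finset.sum_subset hsub2 (fun j _ hj => ?_)]
          rw [Finset.mem_range] at hj
          split_ifs with hg
          · rw [Nat.choose_eq_zero_of_lt (show κ < j by omega)]; push_cast; ring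
          · rfl
        · rw [Finset.mem_range] at hβ
          refine Finset.sum_eq_zero fun j _ => ?_
          split_ifs with hg
          · rw [Nat.choose_eq_zero_of_lt (show n-a < β by omega)]; push_cast; ring
          · rfl
    _ = ∑ β ∈ Finset.range (n+c+1), ∑ j ∈ Finset.range (n+c+1), canBody p q n s a β κ j := by
        refine Finset.sum_congr rfl fun β hβ => Finset.sum_congr rfl fun j hj => ?_
        rw [Finset.mem_range] at hβ hj
        by_cases hjκ : j ≤ κ
        · have hguard : (n-a+κ ≤ s+(β+j)) ↔ (n ≤ s + (a+β) ∧ κ - j ≤ s + (a+β) - n) := by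
            omega
          rw [canBody]
          by_cases hg : n-a+κ ≤ s+(β+j)
          · rw [if_pos hg, if_pos (hguard.mp hg)]
            have harg : s+(β+j)-(n-a+κ) = (s + (a+β) - n) - (κ - j) := by omega
            rw [harg]
            have hidB : ((n.choose (a+β) : ℕ) : K) * (((a+β).factorial : ℕ) : K)
                = ((n.choose a : ℕ) : K) * ((a.factorial : ℕ) : K) *
                  ((((n-a).choose β : ℕ) : K) * ((β.factorial : ℕ) : K)) := by
              exact_mod_cast idB n a β
            calc ((n.choose a : ℕ) : K) * ((a.factorial : ℕ) : K) * p κ a *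
                (((n-a).choose β : ℕ) : K) * ((β.factorial : ℕ) : K) * ((κ.choose j : ℕ) : K) *
                (((β+j).descFactorial j : ℕ) : K) * q ((s + (a+β) - n) - (κ - j)) (β+j)
                = (((n.choose a : ℕ) : K) * ((a.factorial : ℕ) : K) *
                  ((((n-a).choose β : ℕ) : K) * ((β.factorial : ℕ) : K))) * ((κ.choose j : ℕ) : K) *
                  (((β+j).descFactorial j : ℕ) : K) * p κ a * q ((s + (a+β) - n) - (κ - j)) (β+j) := by
                  ring
              _ = _ := by rw [← hidB]
          · rw [if_neg hg, if_neg (fun h => hg (hguard.mpr h))]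
        · have hκj : κ < j := by omega
          rw [canBody_eq_zero_of_choose hκj]
          split_ifs with hg
          · rw [Nat.choose_eq_zero_of_lt hκj]; push_cast; ring
          · rfl



lemma coreB {c : ℕ} (p q : ℕ → ℕ → K) (hp : ∀ m μ, μ + c < m → p m μ = 0) (n s : ℕ) :
    (∑ t ∈ Finset.range (n+c+1),
      (∑ a ∈ Finset.range (n+1), if n ≤ t+a then
          ((n.choose a : ℕ) : K) * ((a.factorial : ℕ) : K) * p (t+a-n) a else 0) *
      (∑ b ∈ Finset.range (t+1), if t ≤ s+b then
          ((t.choose b : ℕ) : K) * ((b.factorial : ℕ) : K) * q (s+b-t) b else 0))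
    = ∑ a ∈ Finset.range (n+c+1), ∑ β ∈ Finset.range (n+c+1), ∑ κ ∈ Finset.range (n+c+1),
        ∑ j ∈ Finset.range (n+c+1), canBody p q n s a β κ j := by
  classical
  have YB : ℕ → K := fun t => 0
  calc
    (∑ t ∈ Finset.range (n+c+1),
      (∑ a ∈ Finset.range (n+1), if n ≤ t+a then
          ((n.choose a : ℕ) : K) * ((a.factorial : ℕ) : K) * p (t+a-n) a else 0) *
      (∑ b ∈ Finset.range (t+1), if t ≤ s+b then
          ((t.choose b : ℕ) : K) * ((b.factorial : ℕ) : K) * q (s+b-t) b else 0))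
      = ∑ a ∈ Finset.range (n+1), ∑ t ∈ Finset.range (n+c+1),
          (if n ≤ t+a then ((n.choose a : ℕ) : K) * ((a.factorial : ℕ) : K) * p (t+a-n) a else 0) *
          (∑ b ∈ Finset.range (t+1), if t ≤ s+b then
            ((t.choose b : ℕ) : K) * ((b.factorial : ℕ) : K) * q (s+b-t) b else 0) := by
        rw [Finset.sum_comm]
        exact Finset.sum_congr rfl fun t _ => Finset.sum_mul _ _ _
    _ = ∑ a ∈ Finset.range (n+1), ∑ κ ∈ Finset.range (n+c+1),
          (((n.choose a : ℕ) : K) * ((a.factorial : ℕ) : K) * p κ a) *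
          (∑ b ∈ Finset.range (n-a+κ+1), if n-a+κ ≤ s+b then
            (((n-a+κ).choose b : ℕ) : K) * ((b.factorial : ℕ) : K) * q (s+b-(n-a+κ)) b else 0) := by
        refine Finset.sum_congr rfl fun a ha => ?_
        rw [Finset.mem_range] at ha
        -- kill the guard, restrict to Ico, shift, extend
        have e1 : ∀ t ∈ Finset.range (n+c+1),
            (if n ≤ t+a then ((n.choose a : ℕ) : K) * ((a.factorial : ℕ) : K) * p (t+a-n) a else 0) *
            (∑ b ∈ Finset.range (t+1), if t ≤ s+b then
              ((t.choose b : ℕ) : K) * ((b.factorial : ℕ) : K) * q (s+b-t) b else 0)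
            = (if n ≤ t+a then
                (((n.choose a : ℕ) : K) * ((a.factorial : ℕ) : K) * p (t+a-n) a) *
                (∑ b ∈ Finset.range (t+1), if t ≤ s+b then
                  ((t.choose b : ℕ) : K) * ((b.factorial : ℕ) : K) * q (s+b-t) b else 0)
              else 0) := by
          intro t _
          split_ifs with h
          · rfl
          · rw [zero_mul]
        rw [Finset.sum_congr rfl e1]
        have hIco : Finset.Ico (n-a) (n+c+1) ⊆ Finset.range (n+c+1) := fun x hx => by
          rw [Finset.mem_Ico] at hx; rw [Finset.mem_range]; omega
        rw [← Finset.sum_subset hIco (fun t ht htn => ?_)]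
        swap
        · rw [Finset.mem_range] at ht
          rw [Finset.mem_Ico] at htn
          rw [if_neg (by omega)]
        rw [Finset.sum_Ico_eq_sum_range]
        have hlen : n+c+1 - (n-a) = a+c+1 := by omega
        rw [hlen]
        have e2 : ∀ κ ∈ Finset.range (a+c+1),
            (if n ≤ (n-a+κ)+a then
              (((n.choose a : ℕ) : K) * ((a.factorial : ℕ) : K) * p ((n-a+κ)+a-n) a) *
              (∑ b ∈ Finset.range ((n-a+κ)+1), if (n-a+κ) ≤ s+b then
                (((n-a+κ).choose b : ℕ) : K) * ((b.factorial : ℕ) : K) * q (s+b-(n-a+κ)) b else 0)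
            else 0)
            = (((n.choose a : ℕ) : K) * ((a.factorial : ℕ) : K) * p κ a) *
              (∑ b ∈ Finset.range (n-a+κ+1), if n-a+κ ≤ s+b then
                (((n-a+κ).choose b : ℕ) : K) * ((b.factorial : ℕ) : K) * q (s+b-(n-a+κ)) b else 0) := by
          intro κ _
          rw [if_pos (by omega), show (n-a+κ)+a-n = κ by omega]
        rw [Finset.sum_congr rfl e2]
        refine Finset.sum_subset (fun x hx => by rw [Finset.mem_range] at hx ⊢; omega)
          fun κ _ hκ => ?_
        rw [Finset.mem_range] at hκ
        rw [hp κ a (by omega)]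
        rw [mul_zero, zero_mul]
    _ = ∑ a ∈ Finset.range (n+1), ∑ κ ∈ Finset.range (n+c+1), ∑ β ∈ Finset.range (n+c+1),
          ∑ j ∈ Finset.range (n+c+1), canBody p q n s a β κ j := by
        refine Finset.sum_congr rfl fun a ha => Finset.sum_congr rfl fun κ hκ => ?_
        rw [Finset.mem_range] at ha hκ
        exact coreB_inner p q n s a κ (by omega) (by omega)
    _ = ∑ a ∈ Finset.range (n+1), ∑ β ∈ Finset.range (n+c+1), ∑ κ ∈ Finset.range (n+c+1),
          ∑ j ∈ Finset.range (n+c+1), canBody p q n s a β κ j := by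
        exact Finset.sum_congr rfl fun a _ => Finset.sum_comm
    _ = ∑ a ∈ Finset.range (n+c+1), ∑ β ∈ Finset.range (n+c+1), ∑ κ ∈ Finset.range (n+c+1),
          ∑ j ∈ Finset.range (n+c+1), canBody p q n s a β κ j := by
        refine Finset.sum_subset (fun x hx => by rw [Finset.mem_range] at hx ⊢; omega)
          fun a _ ha => ?_
        rw [Finset.mem_range] at ha
        exact Finset.sum_eq_zero fun β _ => Finset.sum_eq_zero fun κ _ =>
          Finset.sum_eq_zero fun j _ => canBody_eq_zero_of_lt (by omega)

/-- multiplicativity of `act` -/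
lemma act_mul (P Q : Op K) {c : ℕ} (hP : OrdLE P c) (n s : ℕ) :
    act (opMul P Q) n s = ∑ t ∈ Finset.range (n+c+1), act P n t * act Q t s := by
  have lhs : act (opMul P Q) n s
      = ∑ i ∈ Finset.range (n+1), if n ≤ s + i then
          ((n.choose i : ℕ) : K) * ((i.factorial : ℕ) : K) *
          (∑ κ ∈ Finset.range (i+c+1), ∑ j ∈ Finset.range (κ+1),
            if κ - j ≤ s+i-n then ((κ.choose j : ℕ) : K) *
              ∑ ab ∈ Finset.HasAntidiagonal.antidiagonal i, cf P κ ab.1 * (((ab.2+j).descFactorial j : ℕ) : K)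
                * cf Q ((s+i-n) - (κ-j)) (ab.2+j)
            else 0)
        else 0 := by
    rw [act]
    refine Finset.sum_congr rfl fun i _ => ?_
    split_ifs with h
    · rw [cf_opMul P Q hP]
    · rfl
  rw [lhs, coreA (cf P) (cf Q) hP n s, ← coreB (cf P) (cf Q) hP n s]
  rfl



lemma act_top (P : Op K) (μ m : ℕ) :
    act P μ m = (∑ j ∈ Finset.range μ, if μ ≤ m + j then
        ((μ.choose j : ℕ) : K) * ((j.factorial : ℕ) : K) * cf P (m+j-μ) j else 0)
      + ((μ.factorial : ℕ) : K) * cf P m μ := by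
  rw [act, Finset.sum_range_succ, if_pos (by omega : μ ≤ m + μ), Nat.choose_self,
    Nat.add_sub_cancel]
  push_cast
  ring

lemma act_inj {P Q : Op K} (h : ∀ n s, act P n s = act Q n s) : P = Q := by
  apply op_ext
  have H : ∀ μ m, cf P m μ = cf Q m μ := by
    intro μ
    induction μ using Nat.strong_induction_on with
    | _ μ ih =>
      intro m
      have h1 := h μ m
      rw [act_top, act_top] at h1
      have h2 : (∑ j ∈ Finset.range μ, if μ ≤ m + j then
          ((μ.choose j : ℕ) : K) * ((j.factorial : ℕ) : K) * cf P (m+j-μ) j else 0)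
          = ∑ j ∈ Finset.range μ, if μ ≤ m + j then
          ((μ.choose j : ℕ) : K) * ((j.factorial : ℕ) : K) * cf Q (m+j-μ) j else 0 := by
        refine Finset.sum_congr rfl fun j hj => ?_
        rw [Finset.mem_range] at hj
        split_ifs with hg
        · rw [ih j hj]
        · rfl
      rw [h2] at h1
      have h3 := add_left_cancel h1
      exact mul_left_cancel₀ (Nat.cast_ne_zero.mpr (Nat.factorial_ne_zero μ)) h3
  exact fun m μ => H μ m

/-- coefficients of the operator reconstructed from a matrix -/
def uc (A : ℕ → ℕ → K) : ℕ → ℕ → K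
  | μ, m => ((μ.factorial : ℕ) : K)⁻¹ * (A μ m - ∑ j ∈ (Finset.range μ).attach,
      if μ ≤ m + j.1 then
        ((μ.choose j.1 : ℕ) : K) * ((j.1.factorial : ℕ) : K) * uc A j.1 (m + j.1 - μ)
      else 0)
  termination_by μ m => μ
  decreasing_by exact Finset.mem_range.mp j.2

lemma uc_eq (A : ℕ → ℕ → K) (μ m : ℕ) :
    uc A μ m = ((μ.factorial : ℕ) : K)⁻¹ * (A μ m - ∑ j ∈ Finset.range μ,
      if μ ≤ m + j then
        ((μ.choose j : ℕ) : K) * ((j.factorial : ℕ) : K) * uc A j (m + j - μ)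
      else 0) := by
  rw [uc]
  congr 1
  congr 1
  rw [← Finset.sum_attach (Finset.range μ)]

def unact (A : ℕ → ℕ → K) : Op K := fun kf => fun νf => uc A (νf 0) (kf 0)

lemma cf_unact (A : ℕ → ℕ → K) (m μ : ℕ) : cf (unact A) m μ = uc A μ m := by
  show (unact A (fun _ => m)) (Finsupp.single 0 μ) = uc A μ m
  rw [unact]
  simp

lemma act_unact (A : ℕ → ℕ → K) (n s : ℕ) : act (unact A) n s = A n s := by
  rw [act_top]
  have h1 : (∑ j ∈ Finset.range n, if n ≤ s + j then
      ((n.choose j : ℕ) : K) * ((j.factorial : ℕ) : K) * cf (unact A) (s+j-n) j else 0)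
      = ∑ j ∈ Finset.range n, if n ≤ s + j then
      ((n.choose j : ℕ) : K) * ((j.factorial : ℕ) : K) * uc A j (s+j-n) else 0 := by
    refine Finset.sum_congr rfl fun j _ => ?_
    split_ifs
    · rw [cf_unact]
    · rfl
  rw [h1, cf_unact, uc_eq, ← mul_assoc,
    mul_inv_cancel₀ (Nat.cast_ne_zero.mpr (Nat.factorial_ne_zero n) : ((n.factorial : ℕ) : K) ≠ 0),
    one_mul]
  ring

lemma unact_band {A : ℕ → ℕ → K} {c : ℕ} (h : ∀ n s, n + c < s → A n s = 0) :
    OrdLE (unact A) c := by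
  intro m μ hlt
  rw [cf_unact]
  induction μ using Nat.strong_induction_on generalizing m with
  | _ μ ih =>
    rw [uc_eq, h μ m (by omega)]
    rw [Finset.sum_eq_zero, sub_zero, mul_zero]
    intro j hj
    rw [Finset.mem_range] at hj
    split_ifs with hg
    · rw [ih j hj (m+j-μ) (by omega)]; ring
    · rfl

lemma act_row0 (P : Op K) (m : ℕ) : act P 0 m = cf P m 0 := by
  rw [act]
  simp

lemma cf_one (m μ : ℕ) : cf (opOne : Op K) m μ = if m = 0 ∧ μ = 0 then 1 else 0 := by
  rw [cf, opOne]
  have hc : ((fun _ => m : Fin 1 → ℕ) = 0) ↔ m = 0 := by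
    constructor
    · intro h; exact congrFun h 0
    · intro h; subst h; funext i; rfl
  by_cases hm : m = 0
  · rw [if_pos (hc.mpr hm), MvPowerSeries.coeff_one]
    simp [Finsupp.single_eq_zero, hm]
  · rw [if_neg (fun h => hm (hc.mp h))]
    simp [hm]

lemma cf_delPow (k m μ : ℕ) : cf (delPow k : Op K) m μ = if m = k ∧ μ = 0 then 1 else 0 := by
  rw [cf, delPow]
  have hc : ((fun _ => m : Fin 1 → ℕ) = (fun _ => k)) ↔ m = k := by
    constructor
    · intro h; exact congrFun h 0
    · intro h; subst h; rfl
  by_cases hm : m = k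
  · rw [if_pos (hc.mpr hm), MvPowerSeries.coeff_one]
    simp [Finsupp.single_eq_zero, hm]
  · rw [if_neg (fun h => hm (hc.mp h))]
    simp [hm]

lemma act_one (n s : ℕ) : act (opOne : Op K) n s = if n = s then 1 else 0 := by
  rw [act]
  have hterm : ∀ j ∈ Finset.range (n+1),
      (if n ≤ s + j then ((n.choose j : ℕ) : K) * ((j.factorial : ℕ) : K)
        * cf (opOne) (s+j-n) j else 0) = if j = 0 ∧ n = s then 1 else 0 := by
    intro j _
    rw [cf_one]
    by_cases hj : j = 0
    · subst hj
      by_cases hns : n = s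
      · subst hns
        rw [if_pos (show n ≤ n + 0 by omega), if_pos (show n + 0 - n = 0 ∧ 0 = 0 by omega),
          if_pos (show 0 = 0 ∧ n = n by simp)]
        simp
      · rw [if_neg (show ¬(0 = 0 ∧ n = s) from fun h => hns h.2)]
        by_cases hg : n ≤ s + 0
        · rw [if_pos hg, if_neg (show ¬(s + 0 - n = 0 ∧ 0 = 0) by omega)]
          ring
        · rw [if_neg hg]
    · rw [if_neg (show ¬(j = 0 ∧ n = s) from fun h => hj h.1)]
      by_cases hg : n ≤ s + j
      · rw [if_pos hg, if_neg (show ¬(s + j - n = 0 ∧ j = 0) from fun h => hj h.2)]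
        ring
      · rw [if_neg hg]
  rw [Finset.sum_congr rfl hterm]
  by_cases hns : n = s
  · simp [hns]
  · simp [hns]

lemma act_delPow (k n s : ℕ) : act (delPow k : Op K) n s = if s = n + k then 1 else 0 := by
  rw [act]
  have hterm : ∀ j ∈ Finset.range (n+1),
      (if n ≤ s + j then ((n.choose j : ℕ) : K) * ((j.factorial : ℕ) : K)
        * cf (delPow k) (s+j-n) j else 0) = if j = 0 ∧ s = n + k then 1 else 0 := by
    intro j _
    rw [cf_delPow]
    by_cases hj : j = 0
    · subst hj
      by_cases hns : s = n + k
      · subst hns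
        rw [if_pos (show n ≤ n + k + 0 by omega),
          if_pos (show n + k + 0 - n = k ∧ 0 = 0 by omega),
          if_pos (show 0 = 0 ∧ n + k = n + k by simp)]
        simp
      · rw [if_neg (show ¬(0 = 0 ∧ s = n + k) from fun h => hns h.2)]
        by_cases hg : n ≤ s + 0
        · rw [if_pos hg, if_neg (show ¬(s + 0 - n = k ∧ 0 = 0) by omega)]
          ring
        · rw [if_neg hg]
    · rw [if_neg (show ¬(j = 0 ∧ s = n + k) from fun h => hj h.1)]
      by_cases hg : n ≤ s + j
      · rw [if_pos hg, if_neg (show ¬(s + j - n = k ∧ j = 0) from fun h => hj h.2)]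
        ring
      · rw [if_neg hg]
  rw [Finset.sum_congr rfl hterm]
  by_cases hns : s = n + k
  · simp [hns]
  · simp [hns]

lemma ordLE_one : OrdLE (opOne : Op K) 0 := by
  intro m μ h
  rw [cf_one, if_neg (by omega)]

lemma ordLE_delPow (k : ℕ) : OrdLE (delPow k : Op K) k := by
  intro m μ h
  rw [cf_delPow, if_neg (by omega)]



/-- banded-row predicate for matrices -/
def RB (A : ℕ → ℕ → K) (c : ℕ) : Prop := ∀ n s, n + c < s → A n s = 0

def matMul (A B : ℕ → ℕ → K) : ℕ → ℕ → K := fun n s => ∑ᶠ t, A n t * B t s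

lemma matMul_eq {A : ℕ → ℕ → K} (B : ℕ → ℕ → K) {c : ℕ} (hA : RB A c) (n s : ℕ) :
    matMul A B n s = ∑ t ∈ Finset.range (n+c+1), A n t * B t s := by
  rw [matMul]
  apply finsum_eq_sum_of_support_subset
  intro t ht
  rw [Function.mem_support] at ht
  rw [Finset.coe_range, Set.mem_Iio]
  by_contra hc
  exact ht (by rw [hA n t (by omega)]; ring)

lemma act_opMul (P Q : Op K) {c : ℕ} (hP : OrdLE P c) (n s : ℕ) :
    act (opMul P Q) n s = matMul (act P) (act Q) n s := by
  rw [act_mul P Q hP, matMul_eq (act Q) (fun n s h => act_band hP h)]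

lemma RB_matMul {A B : ℕ → ℕ → K} {c d : ℕ} (hA : RB A c) (hB : RB B d) :
    RB (matMul A B) (c+d) := by
  intro n s h
  rw [matMul_eq B hA]
  refine Finset.sum_eq_zero fun t ht => ?_
  rw [Finset.mem_range] at ht
  rw [hB t s (by omega)]
  ring

lemma matMul_assoc {A B : ℕ → ℕ → K} (C : ℕ → ℕ → K) {c d : ℕ}
    (hA : RB A c) (hB : RB B d) :
    matMul (matMul A B) C = matMul A (matMul B C) := by
  funext n s
  rw [matMul_eq C (RB_matMul hA hB), matMul_eq (matMul B C) hA]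
  have lhs : ∑ t ∈ Finset.range (n+(c+d)+1), matMul A B n t * C t s
      = ∑ t ∈ Finset.range (n+(c+d)+1), ∑ r ∈ Finset.range (n+c+1), A n r * B r t * C t s := by
    refine Finset.sum_congr rfl fun t _ => ?_
    rw [matMul_eq B hA, Finset.sum_mul]
  rw [lhs, Finset.sum_comm]
  refine Finset.sum_congr rfl fun r hr => ?_
  rw [Finset.mem_range] at hr
  rw [matMul_eq C hB, Finset.mul_sum]
  have hsub : Finset.range (r+d+1) ⊆ Finset.range (n+(c+d)+1) := fun x hx => by
    rw [Finset.mem_range] at hx ⊢; omega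
  rw [← Finset.sum_subset hsub (fun t _ ht => ?_)]
  · refine Finset.sum_congr rfl fun t _ => by ring
  · rw [Finset.mem_range] at ht
    rw [hB r t (by omega)]
    ring

def matId : ℕ → ℕ → K := fun n s => if n = s then 1 else 0

lemma RB_matId : RB (matId : ℕ → ℕ → K) 0 := by
  intro n s h
  rw [matId, if_neg (by omega)]

lemma matId_matMul (A : ℕ → ℕ → K) : matMul matId A = A := by
  funext n s
  rw [matMul_eq A RB_matId]
  have : ∀ t ∈ Finset.range (n+0+1), (matId n t * A t s : K)
      = if t = n then A t s else 0 := by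
    intro t _
    rw [matId]
    by_cases h : n = t
    · rw [if_pos h, if_pos h.symm, one_mul]
    · rw [if_neg h, if_neg (fun hh => h hh.symm), zero_mul]
  rw [Finset.sum_congr rfl this, Finset.sum_ite_eq' (Finset.range (n+0+1)) n (fun t => A t s),
    if_pos (by rw [Finset.mem_range]; omega)]

lemma matMul_matId {A : ℕ → ℕ → K} {c : ℕ} (hA : RB A c) : matMul A matId = A := by
  funext n s
  rw [matMul_eq matId hA]
  have : ∀ t ∈ Finset.range (n+c+1), (A n t * matId t s : K)
      = if t = s then A n t else 0 := by
    intro t _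
    rw [matId]
    by_cases h : t = s
    · rw [if_pos h, if_pos h, mul_one]
    · rw [if_neg h, if_neg h, mul_zero]
  rw [Finset.sum_congr rfl this, Finset.sum_ite_eq' (Finset.range (n+c+1)) s (fun t => A n t)]
  by_cases hs : s ∈ Finset.range (n+c+1)
  · rw [if_pos hs]
  · rw [if_neg hs]
    rw [Finset.mem_range] at hs
    exact (hA n s (by omega)).symm

/-- the shift matrix `∂^k` -/
def matDel (k : ℕ) : ℕ → ℕ → K := fun n s => if s = n + k then 1 else 0

lemma RB_matDel (k : ℕ) : RB (matDel k : ℕ → ℕ → K) k := by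
  intro n s h
  rw [matDel, if_neg (by omega)]

lemma matDel_matMul (k : ℕ) (A : ℕ → ℕ → K) (n s : ℕ) :
    matMul (matDel k) A n s = A (n+k) s := by
  rw [matMul_eq A (RB_matDel k)]
  have : ∀ t ∈ Finset.range (n+k+1), (matDel k n t * A t s : K)
      = if t = n+k then A t s else 0 := by
    intro t _
    rw [matDel]
    by_cases h : t = n + k
    · rw [if_pos h, if_pos h, one_mul]
    · rw [if_neg h, if_neg h, zero_mul]
  rw [Finset.sum_congr rfl this,
    Finset.sum_ite_eq' (Finset.range (n+k+1)) (n+k) (fun t => A t s),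
    if_pos (by rw [Finset.mem_range]; omega)]

/-- left inverse of a lower-triangular matrix -/
def Binv (A : ℕ → ℕ → K) : ℕ → ℕ → K
  | n, s => if n < s then 0 else
      (A s s)⁻¹ * ((if n = s then 1 else 0)
        - ∑ t ∈ (Finset.Ico (s+1) (n+1)).attach, Binv A n t.1 * A t.1 s)
  termination_by n s => n - s
  decreasing_by
    have := Finset.mem_Ico.mp t.2
    omega

lemma Binv_eq (A : ℕ → ℕ → K) (n s : ℕ) :
    Binv A n s = if n < s then 0 else
      (A s s)⁻¹ * ((if n = s then 1 else 0)
        - ∑ t ∈ Finset.Ico (s+1) (n+1), Binv A n t * A t s) := by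
  rw [Binv]
  congr 2
  rw [← Finset.sum_attach (Finset.Ico (s+1) (n+1))]

lemma Binv_lower (A : ℕ → ℕ → K) {n s : ℕ} (h : n < s) : Binv A n s = 0 := by
  rw [Binv_eq, if_pos h]

lemma RB_Binv (A : ℕ → ℕ → K) : RB (Binv A) 0 := fun n s h => Binv_lower A (by omega)

lemma Binv_matMul {A : ℕ → ℕ → K} (hA : RB A 0) (hdiag : ∀ n, A n n ≠ 0) :
    matMul (Binv A) A = matId := by
  funext n s
  rw [matMul_eq A (RB_Binv A)]
  by_cases hs : n < s
  · rw [Finset.sum_eq_zero, matId, if_neg (by omega)]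
    intro t ht
    rw [Finset.mem_range] at ht
    rw [hA t s (by omega)]
    ring
  · -- s ≤ n
    have hrange : Finset.range (n+0+1) = Finset.Ico 0 (n+1) := by
      rw [Finset.range_eq_Ico]
    rw [hrange, ← Finset.sum_Ico_consecutive _ (by omega : 0 ≤ s) (by omega : s ≤ n+1),
      Finset.sum_eq_sum_Ico_succ_bot (by omega : s < n+1)]
    have h1 : ∑ t ∈ Finset.Ico 0 s, Binv A n t * A t s = 0 := by
      refine Finset.sum_eq_zero fun t ht => ?_
      rw [Finset.mem_Ico] at ht
      rw [hA t s (by omega)]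
      ring
    have h2 : Binv A n s * A s s = (if n = s then 1 else 0)
        - ∑ t ∈ Finset.Ico (s+1) (n+1), Binv A n t * A t s := by
      rw [Binv_eq, if_neg hs, mul_comm, ← mul_assoc, mul_inv_cancel₀ (hdiag s), one_mul]
    rw [h1, h2, matId]
    ring

/-- right inverse of a lower-triangular matrix -/
def Cinv (A : ℕ → ℕ → K) : ℕ → ℕ → K
  | n, s => (A n n)⁻¹ * ((if n = s then 1 else 0)
      - ∑ t ∈ (Finset.range n).attach, A n t.1 * Cinv A t.1 s)
  termination_by n s => n
  decreasing_by exact Finset.mem_range.mp t.2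

lemma Cinv_eq (A : ℕ → ℕ → K) (n s : ℕ) :
    Cinv A n s = (A n n)⁻¹ * ((if n = s then 1 else 0)
      - ∑ t ∈ Finset.range n, A n t * Cinv A t s) := by
  rw [Cinv]
  congr 2
  rw [← Finset.sum_attach (Finset.range n)]

lemma Cinv_lower (A : ℕ → ℕ → K) : ∀ {n s : ℕ}, n < s → Cinv A n s = 0 := by
  intro n
  induction n using Nat.strong_induction_on with
  | _ n ih =>
    intro s h
    rw [Cinv_eq, if_neg (by omega), Finset.sum_eq_zero, sub_zero, mul_zero]
    intro t ht
    rw [Finset.mem_range] at ht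
    rw [ih t ht (by omega)]
    ring

lemma RB_Cinv (A : ℕ → ℕ → K) : RB (Cinv A) 0 := fun n s h => Cinv_lower A (by omega)

lemma matMul_Cinv {A : ℕ → ℕ → K} (hA : RB A 0) (hdiag : ∀ n, A n n ≠ 0) :
    matMul A (Cinv A) = matId := by
  funext n s
  rw [matMul_eq (Cinv A) hA]
  have hrange : Finset.range (n+0+1) = Finset.range (n+1) := by norm_num
  rw [hrange, Finset.sum_range_succ]
  have h2 : A n n * Cinv A n s = (if n = s then 1 else 0)
      - ∑ t ∈ Finset.range n, A n t * Cinv A t s := by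
    rw [Cinv_eq, ← mul_assoc, mul_inv_cancel₀ (hdiag n), one_mul]
  rw [h2, matId]
  ring

lemma Binv_eq_Cinv {A : ℕ → ℕ → K} (hA : RB A 0) (hdiag : ∀ n, A n n ≠ 0) :
    Binv A = Cinv A := by
  have h1 : matMul (Binv A) A = matId := Binv_matMul hA hdiag
  have h2 : matMul A (Cinv A) = matId := matMul_Cinv hA hdiag
  calc Binv A = matMul (Binv A) matId := (matMul_matId (RB_Binv A)).symm
    _ = matMul (Binv A) (matMul A (Cinv A)) := by rw [h2]
    _ = matMul (matMul (Binv A) A) (Cinv A) := (matMul_assoc _ (RB_Binv A) hA).symm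
    _ = matMul matId (Cinv A) := by rw [h1]
    _ = Cinv A := matId_matMul _

lemma matMul_Binv {A : ℕ → ℕ → K} (hA : RB A 0) (hdiag : ∀ n, A n n ≠ 0) :
    matMul A (Binv A) = matId := by
  rw [Binv_eq_Cinv hA hdiag]
  exact matMul_Cinv hA hdiag



/-- the conjugating matrix, built row-block by row-block -/
def Sig (M : ℕ → ℕ → K) (k : ℕ) (hk : 0 < k) : ℕ → ℕ → K
  | n => if h : n < k then (fun s => if n = s then 1 else 0)
      else fun s => ∑ t ∈ Finset.range (n-k+1), Sig M k hk (n-k) t * M t s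
  termination_by n => n
  decreasing_by omega

lemma Sig_low {M : ℕ → ℕ → K} {k : ℕ} {hk : 0 < k} {n : ℕ} (h : n < k) (s : ℕ) :
    Sig M k hk n s = if n = s then 1 else 0 := by
  rw [Sig, dif_pos h]

lemma Sig_rec {M : ℕ → ℕ → K} {k : ℕ} {hk : 0 < k} {n : ℕ} (h : ¬ n < k) (s : ℕ) :
    Sig M k hk n s = ∑ t ∈ Finset.range (n-k+1), Sig M k hk (n-k) t * M t s := by
  rw [Sig, dif_neg h]

lemma Sig_lower {M : ℕ → ℕ → K} {k : ℕ} (hM : RB M k) (hk : 0 < k) :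
    RB (Sig M k hk) 0 := by
  intro n s h
  by_cases hn : n < k
  · rw [Sig_low hn, if_neg (by omega)]
  · rw [Sig_rec hn]
    refine Finset.sum_eq_zero fun t ht => ?_
    rw [Finset.mem_range] at ht
    rw [hM t s (by omega)]
    ring

lemma Sig_step {M : ℕ → ℕ → K} {k : ℕ} {hk : 0 < k} (n s : ℕ) :
    Sig M k hk (n+k) s = ∑ t ∈ Finset.range (n+1), Sig M k hk n t * M t s := by
  rw [Sig_rec (by omega), show n + k - k = n from by omega]

lemma Sig_diag {M : ℕ → ℕ → K} {k : ℕ} (hM : RB M k) (hk : 0 < k)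
    (hdiag : ∀ n, M n (n+k) ≠ 0) : ∀ n, Sig M k hk n n ≠ 0 := by
  intro n
  induction n using Nat.strong_induction_on with
  | _ n ih =>
    by_cases hn : n < k
    · rw [Sig_low hn, if_pos rfl]
      exact one_ne_zero
    · rw [Sig_rec hn, Finset.sum_range_succ]
      have h1 : ∑ t ∈ Finset.range (n-k), Sig M k hk (n-k) t * M t n = 0 := by
        refine Finset.sum_eq_zero fun t ht => ?_
        rw [Finset.mem_range] at ht
        rw [hM t n (by omega)]
        ring
      rw [h1, zero_add]
      have h2 : M (n-k) n ≠ 0 := by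
        have := hdiag (n-k)
        rwa [show n - k + k = n by omega] at this
      exact mul_ne_zero (ih (n-k) (by omega)) h2

lemma Sig_conj {M : ℕ → ℕ → K} {k : ℕ} (hM : RB M k) (hk : 0 < k) :
    matMul (matDel k) (Sig M k hk) = matMul (Sig M k hk) M := by
  funext n s
  rw [matDel_matMul, Sig_step, matMul_eq M (Sig_lower hM hk)]

lemma Sig_row0 {M : ℕ → ℕ → K} {k : ℕ} {hk : 0 < k} (s : ℕ) :
    Sig M k hk 0 s = if 0 = s then 1 else 0 := Sig_low hk s

/-! ## translations of the hypotheses -/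

lemma dg_eq (kf : Fin 1 → ℕ) : dg kf = kf 0 := by
  rw [dg, Fin.sum_univ_one]

lemma dgF_eq (μf : Fin 1 →₀ ℕ) : dgF μf = μf 0 := by
  rw [← finsupp_single μf, dgF_single, Finsupp.single_eq_same]

lemma ordLE_of_ord {P : Op K} {k : ℕ} (hord : ord P = (((k : ℤ) : ℝ) : EReal)) :
    OrdLE P k := by
  intro m μ hlt
  by_contra hne
  have hle : (((((m : ℤ) - (μ : ℤ)) : ℤ) : ℝ) : EReal) ≤ ord P := by
    rw [ord]
    refine le_trans ?_ (le_iSup _ (fun _ => m : Fin 1 → ℕ))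
    refine le_trans ?_ (le_iSup _ (Finsupp.single 0 μ))
    have hc : MvPowerSeries.coeff (Finsupp.single 0 μ) (P (fun _ => m)) ≠ 0 := hne
    rw [dg_const, dgF_single]
    exact le_iSup (fun _ : MvPowerSeries.coeff (Finsupp.single 0 μ) (P (fun _ => m)) ≠ 0 =>
      (((((m : ℤ) - (μ : ℤ)) : ℤ) : ℝ) : EReal)) hc
  rw [hord] at hle
  rw [EReal.coe_le_coe_iff] at hle
  have : (m : ℤ) - (μ : ℤ) ≤ (k : ℤ) := by exact_mod_cast hle
  omega

lemma cf_liftF (f : (Fin 1 → ℕ) →₀ K) (m μ : ℕ) :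
    cf (liftF f) m μ = if μ = 0 then f (fun _ => m) else 0 := by
  rw [cf, liftF, MvPowerSeries.coeff_C]
  by_cases hμ : μ = 0
  · rw [if_pos (by simp [hμ]), if_pos hμ]
  · rw [if_neg (by simp [hμ]), if_neg hμ]

lemma cf_opComp (P : Op K) (d : ℤ) (m μ : ℕ) :
    cf (opComp P d) m μ = if (m : ℤ) - (μ : ℤ) = d then cf P m μ else 0 := by
  show (opComp P d (fun _ => m)) (Finsupp.single 0 μ) = _
  rw [opComp]
  have : MvPowerSeries.coeff (Finsupp.single 0 μ) (P (fun _ => m)) = cf P m μ := rfl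
  rw [show dg (fun _ => m : Fin 1 → ℕ) = m from dg_const m,
    show dgF (Finsupp.single 0 μ : Fin 1 →₀ ℕ) = μ from dgF_single μ]
  rfl

lemma act_opComp (P : Op K) (k t m : ℕ) :
    act (opComp P (k : ℤ)) t m = if m = t + k then act P t (t+k) else 0 := by
  by_cases hm : m = t + k
  · subst hm
    rw [if_pos rfl, act, act]
    refine Finset.sum_congr rfl fun j hj => ?_
    rw [Finset.mem_range] at hj
    have hg : t ≤ t + k + j := by omega
    rw [if_pos hg, if_pos hg]
    have harg : t + k + j - t = k + j := by omega
    rw [harg, cf_opComp, if_pos (by push_cast; omega)]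
  · rw [if_neg hm, act]
    refine Finset.sum_eq_zero fun j hj => ?_
    rw [Finset.mem_range] at hj
    split_ifs with hg
    · rw [cf_opComp, if_neg (by
        intro hc
        apply hm
        omega)]
      ring
    · rfl

lemma piMap_eq (Q : Op K) (kf : Fin 1 → ℕ) : piMap Q kf = cf Q (kf 0) 0 := by
  rw [piMap, cf]
  rw [Finsupp.single_zero]
  rw [← fun_const kf]
  rfl

lemma diag_ne_zero {P : Op K} {k : ℕ}
    (hreg : ∀ f : (Fin 1 → ℕ) →₀ K, f ≠ 0 →
      piMap (opMul (liftF f) (opComp P (k : ℤ))) ≠ 0) :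
    ∀ n, act P n (n+k) ≠ 0 := by
  intro n
  set f : (Fin 1 → ℕ) →₀ K := Finsupp.single (fun _ => n) 1 with hf
  have hfne : f ≠ 0 := fun hc => one_ne_zero (Finsupp.single_eq_zero.mp hc)
  have hOrd : OrdLE (liftF f) n := by
    intro m μ hlt
    rw [cf_liftF]
    split_ifs with hμ
    · rw [hf, Finsupp.single_apply, if_neg]
      intro hc
      have := congrFun hc 0
      omega
    · rfl
  have hne := hreg f hfne
  rw [Function.ne_iff] at hne
  obtain ⟨kf, hkf⟩ := hne
  have hval : piMap (opMul (liftF f) (opComp P (k : ℤ))) kf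
      = if kf 0 = n + k then act P n (n+k) else 0 := by
    rw [piMap_eq, ← act_row0, act_mul _ _ hOrd]
    have : ∀ t ∈ Finset.range (0+n+1),
        act (liftF f) 0 t * act (opComp P (k : ℤ)) t (kf 0)
        = if t = n then act (opComp P (k : ℤ)) t (kf 0) else 0 := by
      intro t _
      rw [act_row0, cf_liftF, if_pos rfl, hf, Finsupp.single_apply]
      by_cases ht : t = n
      · rw [if_pos ht, if_pos (by subst ht; rfl), one_mul]
      · rw [if_neg ht, if_neg (by
          intro hc
          exact ht (congrFun hc 0).symm), zero_mul]
    rw [Finset.sum_congr rfl this,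
      Finset.sum_ite_eq' (Finset.range (0+n+1)) n
        (fun t => act (opComp P (k : ℤ)) t (kf 0)),
      if_pos (by rw [Finset.mem_range]; omega), act_opComp]
  rw [hval] at hkf
  by_cases hc : kf 0 = n + k
  · rwa [if_pos hc] at hkf
  · rw [if_neg hc] at hkf
    exact absurd rfl hkf



lemma uc_zero (A : ℕ → ℕ → K) (m : ℕ) : uc A 0 m = A 0 m := by
  rw [uc_eq]
  simp

lemma ord_eq_zero {S : Op K} (h0 : OrdLE S 0) (h1 : cf S 0 0 = 1) : ord S = 0 := by
  apply le_antisymm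
  · rw [ord]
    refine iSup_le fun kf => iSup_le fun μf => iSup_le fun hc => ?_
    rw [coeff_eq_cf] at hc
    have hle : kf 0 ≤ μf 0 := by
      by_contra hlt
      exact hc (h0 _ _ (by omega))
    rw [dg_eq, dgF_eq]
    calc ((((kf 0 : ℤ) - (μf 0 : ℤ) : ℤ) : ℝ) : EReal) ≤ (((0 : ℤ) : ℝ) : EReal) := by
          apply EReal.coe_le_coe_iff.mpr
          exact_mod_cast (by omega : (kf 0 : ℤ) - (μf 0 : ℤ) ≤ 0)
      _ = 0 := by norm_num
  · have hc : MvPowerSeries.coeff (Finsupp.single 0 0) (S (fun _ => 0)) ≠ 0 := by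
      show cf S 0 0 ≠ 0
      rw [h1]
      exact one_ne_zero
    have hle : ((((dg (fun _ => (0:ℕ)) : ℤ) - (dgF (Finsupp.single 0 0) : ℤ) : ℤ) : ℝ) : EReal)
        ≤ ord S := by
      rw [ord]
      refine le_trans ?_ (le_iSup _ (fun _ => (0:ℕ) : Fin 1 → ℕ))
      refine le_trans ?_ (le_iSup _ (Finsupp.single 0 0 : Fin 1 →₀ ℕ))
      exact le_iSup (fun _ : MvPowerSeries.coeff (Finsupp.single 0 0) (S (fun _ => 0)) ≠ 0 =>
        ((((dg (fun _ => (0:ℕ)) : ℤ) - (dgF (Finsupp.single 0 0) : ℤ) : ℤ) : ℝ) : EReal)) hc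
    rw [dg_const, dgF_single] at hle
    simpa using hle

theorem schur_main
    (P : Op K) (k : ℕ) (hk : 0 < k) (hord : ord P = (((k : ℤ) : ℝ) : EReal))
    (hreg : ∀ f : (Fin 1 → ℕ) →₀ K, f ≠ 0 →
      piMap (opMul (liftF f) (opComp P (k : ℤ))) ≠ 0) :
    ∃ S T : Op K,
      opMul S T = opOne ∧ opMul T S = opOne ∧
      ord S = 0 ∧ piMap S = piMap opOne ∧
      opMul (opMul T (delPow k)) S = P := by
  classical
  have hOrdP : OrdLE P k := ordLE_of_ord hord
  set M : ℕ → ℕ → K := act P with hM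
  have hband : RB M k := fun n s h => act_band hOrdP h
  have hdiag : ∀ n, M n (n+k) ≠ 0 := diag_ne_zero hreg
  set Sg : ℕ → ℕ → K := Sig M k hk with hSg
  have hSglow : RB Sg 0 := Sig_lower hband hk
  have hSgdiag : ∀ n, Sg n n ≠ 0 := Sig_diag hband hk hdiag
  set T : ℕ → ℕ → K := Binv Sg with hT
  have hTlow : RB T 0 := RB_Binv Sg
  have hTSg : matMul T Sg = matId := Binv_matMul hSglow hSgdiag
  have hSgT : matMul Sg T = matId := matMul_Binv hSglow hSgdiag
  set S : Op K := unact Sg with hS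
  set Topr : Op K := unact T with hToprdef
  have hactS : act S = Sg := funext fun n => funext fun s => act_unact Sg n s
  have hactT : act Topr = T := funext fun n => funext fun s => act_unact T n s
  have hOrdS : OrdLE S 0 := unact_band hSglow
  have hOrdT : OrdLE Topr 0 := unact_band hTlow
  have hactDel : act (delPow k : Op K) = matDel k := funext fun n => funext fun s => by
    rw [act_delPow]; rfl
  refine ⟨S, Topr, ?_, ?_, ?_, ?_, ?_⟩
  · apply act_inj
    intro n s
    rw [act_opMul _ _ hOrdS, hactS, hactT, hSgT, act_one]
    rfl
  · apply act_inj
    intro n s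
    rw [act_opMul _ _ hOrdT, hactS, hactT, hTSg, act_one]
    rfl
  · refine ord_eq_zero hOrdS ?_
    rw [hS, cf_unact, uc_zero, hSg, Sig_row0, if_pos rfl]
  · funext kf
    rw [piMap_eq, piMap_eq, cf_one, hS, cf_unact, uc_zero, hSg, Sig_row0]
    by_cases h : kf 0 = 0
    · rw [if_pos h.symm, if_pos ⟨h, rfl⟩]
    · rw [if_neg (fun hh => h hh.symm), if_neg (fun hh => h hh.1)]
  · have hW : opMul Topr (delPow k) = unact (matMul T (matDel k)) := by
      apply act_inj
      intro n s
      rw [act_opMul _ _ hOrdT, hactT, hactDel, act_unact]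
    have hRBW : RB (matMul T (matDel k)) k := by
      have h := RB_matMul hTlow (RB_matDel (K := K) k)
      rwa [Nat.zero_add] at h
    have hOrdW : OrdLE (opMul Topr (delPow k)) k := by
      rw [hW]
      exact unact_band hRBW
    have hactW : act (opMul Topr (delPow k)) = matMul T (matDel k) := by
      rw [hW]
      exact funext fun n => funext fun s => act_unact _ n s
    have hfinal : matMul (matMul T (matDel k)) Sg = M := by
      rw [matMul_assoc Sg hTlow (RB_matDel k), Sig_conj hband hk,
        ← matMul_assoc M hTlow hSglow, hTSg, matId_matMul]
    apply act_inj
    intro n s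
    rw [act_opMul _ _ hOrdW, hactW, hactS, hfinal]

end S19


/-- If `P ∈ D̂₁^sym` is regular with `ord P = k > 0`, there
is an invertible `S ∈ D̂₁^sym` with `ord S = 0` whose zeroth slice is `1`
(constant term 1: `π(S) = π(1)`) such that `P = S⁻¹ ∂^k S`. -/
theorem schur_dim_one
    (P : Op K) (k : ℕ) (hk : 0 < k) (hord : ord P = (((k : ℤ) : ℝ) : EReal))
    (hreg : ∀ f : (Fin 1 → ℕ) →₀ K, f ≠ 0 →
      piMap (opMul (liftF f) (opComp P (k : ℤ))) ≠ 0) :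
    ∃ S T : Op K,
      opMul S T = opOne ∧ opMul T S = opOne ∧
      ord S = 0 ∧ piMap S = piMap opOne ∧
      opMul (opMul T (delPow k)) S = P :=
  S19.schur_main P k hk hord hreg

end
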